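/- For every λ ∈ Y and every n ≥ 1, with i = 2n−1 one has: λ(n) = 0 if and only if e_n ∈ H_{λ,i}, if and only if p₁p₂⋯p_{i−1}·(e_n − 1) ∈ J_λ. -/

import Mathlib

noncomputable section

/-- Parameter sequences: `Y = {0,1}^ℕ`; the paper's `λ(n)` (for `n ≥ 1`) is `l (n-1) : Bool`,
with `0 ↔ false` and `1 ↔ true`. -/
abbrev Y : Type := ℕ → Bool

/-- The 𝔽₂-vector space `V` with basis `{e i, f i : i ∈ ℤ}` (basis indexed by `ℤ × Bool`). -/
abbrev Vsp : Type := (ℤ × Bool) →₀ ZMod 2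

/-- The basis vector `e i`. -/
def e (i : ℤ) : Vsp := Finsupp.single (i, false) 1

/-- The basis vector `f i`. -/
def f (i : ℤ) : Vsp := Finsupp.single (i, true) 1

/-- The permutation of the basis swapping `e 0` and `f 0`. -/
def aPerm : Equiv.Perm (ℤ × Bool) := Equiv.swap ((0 : ℤ), false) ((0 : ℤ), true)

/-- The shift permutation of the basis, `e i ↦ e (i+1)`, `f i ↦ f (i+1)`. -/
def tPerm : Equiv.Perm (ℤ × Bool) := (Equiv.addRight (1 : ℤ)).prodCongr (Equiv.refl Bool)

/-- The automorphism of `V` induced by a permutation of the basis, viewed as an automorphism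
of the (multiplicatively written) group `V`. -/
def permAut (σ : Equiv.Perm (ℤ × Bool)) : MulAut (Multiplicative Vsp) :=
  AddEquiv.toMultiplicative (Finsupp.domCongr σ : Vsp ≃+ Vsp)

/-- The automorphism `a` of `V`. -/
def aAut : MulAut (Multiplicative Vsp) := permAut aPerm

/-- The automorphism `t` of `V`. -/
def tAut : MulAut (Multiplicative Vsp) := permAut tPerm

/-- The subgroup `⟨a, t⟩ ≤ GL(V)`. -/
def Asub : Subgroup (MulAut (Multiplicative Vsp)) := Subgroup.closure {aAut, tAut}

/-- The group `G = V ⋊ ⟨a, t⟩ ≅ C₂ ≀ C₂ ≀ C_∞`. -/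
abbrev G : Type := Multiplicative Vsp ⋊[Asub.subtype] ↥Asub

/-- The inclusion `V → G`. -/
def ofV (v : Vsp) : G := SemidirectProduct.inl (Multiplicative.ofAdd v)

/-- A subgroup of `V`, viewed as a subgroup of `G`. -/
def subgroupOfV (H : AddSubgroup Vsp) : Subgroup G :=
  Subgroup.map SemidirectProduct.inl (AddSubgroup.toSubgroup H)

/-- The sequence `c_λ`: for `n ≥ 1`, `c (2n-1) = e n`, `c (2n) = f n` if `λ(n) = 0`, and
`c (2n-1) = f n`, `c (2n) = e n` if `λ(n) = 1`. -/
def cseq (l : Y) (m : ℕ) : Vsp :=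
  if (m % 2 = 1) ↔ (l ((m + 1) / 2 - 1) = false) then e ((m + 1) / 2) else f ((m + 1) / 2)

/-- The subgroup `H_{λ,i} = ⟨e 0, f 0, e (-1), f (-1), …, e (-i), f (-i), c 1, …, c i⟩ ≤ V`. -/
def Hsub (l : Y) (i : ℕ) : AddSubgroup Vsp :=
  AddSubgroup.closure
    ((fun j : ℕ => e (-(j : ℤ))) '' Set.Icc 0 i ∪ (fun j : ℕ => f (-(j : ℤ))) '' Set.Icc 0 i ∪
      cseq l '' Set.Icc 1 i)

/-- The integral group ring `ℤG`. -/
abbrev ZG : Type := MonoidAlgebra ℤ G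

/-- The element of `ℤG` corresponding to `v ∈ V ≤ G`. -/
def zOfV (v : Vsp) : ZG := MonoidAlgebra.of ℤ G (ofV v)

/-- The (left) ideal of the group ring `kG` generated by `{g - 1 : g ∈ S}`; this is the
mirror image of the right ideal `(S - 1)kG` of the paper (all modules are taken as left
modules here, mirroring the right modules of the paper). -/
def grpIdeal (k : Type) [CommRing k] (S : Set G) : Ideal (MonoidAlgebra k G) :=
  Ideal.span ((fun g : G => (MonoidAlgebra.of k G g : MonoidAlgebra k G) - 1) '' S)

/-- The permutation module `U_{λ,i} = 𝔽_{p i}G/(H_{λ,i} - 1)𝔽_{p i}G`. -/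
def Ui (p : ℕ → ℕ) (l : Y) (i : ℕ) : Type :=
  MonoidAlgebra (ZMod (p i)) G ⧸ grpIdeal (ZMod (p i)) (subgroupOfV (Hsub l i) : Set G)

instance (p : ℕ → ℕ) (l : Y) (i : ℕ) : AddCommGroup (Ui p l i) :=
  inferInstanceAs (AddCommGroup
    (MonoidAlgebra (ZMod (p i)) G ⧸ grpIdeal (ZMod (p i)) (subgroupOfV (Hsub l i) : Set G)))

instance (p : ℕ → ℕ) (l : Y) (i : ℕ) : Module (MonoidAlgebra (ZMod (p i)) G) (Ui p l i) :=
  inferInstanceAs (Module (MonoidAlgebra (ZMod (p i)) G)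
    (MonoidAlgebra (ZMod (p i)) G ⧸ grpIdeal (ZMod (p i)) (subgroupOfV (Hsub l i) : Set G)))

/-- The canonical ring homomorphism `ℤG → 𝔽_qG`, reducing coefficients mod `q`. -/
def coeffHom (q : ℕ) : ZG →+* MonoidAlgebra (ZMod q) G :=
  ((MonoidAlgebra.lift ℤ (MonoidAlgebra (ZMod q) G) G) (MonoidAlgebra.of (ZMod q) G)).toRingHom

/-- `U_{λ,i}` as a `ℤG`-module. -/
instance (p : ℕ → ℕ) (l : Y) (i : ℕ) : Module ZG (Ui p l i) :=
  Module.compHom _ (coeffHom (p i))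

/-- The module generator `u_{λ,i} = 1 + (H_{λ,i} - 1)𝔽_{p i}G` of `U_{λ,i}`. -/
def ui (p : ℕ → ℕ) (l : Y) (i : ℕ) : Ui p l i :=
  (Submodule.Quotient.mk 1 :
    MonoidAlgebra (ZMod (p i)) G ⧸ grpIdeal (ZMod (p i)) (subgroupOfV (Hsub l i) : Set G))

/-- The index set `{1, 2, 3, …}` for the sequences `(p_i)` and `(H_{λ,i})`. -/
abbrev Idx : Type := {i : ℕ // 1 ≤ i}

/-- The element `u_λ = (u_{λ,1}, u_{λ,2}, …) ∈ ∏_{i ≥ 1} U_{λ,i}`. -/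
def ul (p : ℕ → ℕ) (l : Y) : ∀ i : Idx, Ui p l i.1 := fun i => ui p l i.1

/-- The module `M_λ`: the cyclic `ℤG`-submodule of `∏_{i ≥ 1} U_{λ,i}` generated by `u_λ`. -/
def Ml (p : ℕ → ℕ) (l : Y) : Submodule ZG (∀ i : Idx, Ui p l i.1) :=
  Submodule.span ZG {ul p l}

/-- The annihilator ideal `J_λ = ann_{ℤG}(u_λ)`. -/
def Jl (p : ℕ → ℕ) (l : Y) : Ideal ZG :=
  LinearMap.ker (LinearMap.toSpanSingleton ZG (∀ i : Idx, Ui p l i.1) (ul p l))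

/-- The submodule `M(N-1)` of `M = M_λ`, spanned by the elements `(x-1)m`, `m ∈ M`, `x ∈ N`. -/
def MlAug (p : ℕ → ℕ) (l : Y) (N : AddSubgroup Vsp) : Submodule ZG ↥(Ml p l) :=
  Submodule.span ZG {z : ↥(Ml p l) | ∃ x ∈ N, ∃ m : ↥(Ml p l), z = (zOfV x - 1) • m}

/-- The ideal `(N - 1)ℤG` for a subgroup `N ≤ V`. -/
def augV (N : AddSubgroup Vsp) : Ideal ZG :=
  Ideal.span ((fun v : Vsp => zOfV v - 1) '' (N : Set Vsp))

/-! ### Auxiliary lemmas -/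

lemma cseq_eq_e (l : Y) (n : ℕ) (hn : 1 ≤ n) (hl : l (n - 1) = false) :
    cseq l (2 * n - 1) = e n := by
  have h1 : (2 * n - 1) % 2 = 1 := by omega
  have h2 : (2 * n - 1 + 1) / 2 - 1 = n - 1 := by omega
  rw [cseq, h2, if_pos (by simp [h1, hl])]
  congr 1
  omega

lemma cseq_eq_f (l : Y) (n : ℕ) (hn : 1 ≤ n) (hl : l (n - 1) = true) :
    cseq l (2 * n - 1) = f n := by
  have h1 : (2 * n - 1) % 2 = 1 := by omega
  have h2 : (2 * n - 1 + 1) / 2 - 1 = n - 1 := by omega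
  rw [cseq, h2, if_neg (by simp [h1, hl])]
  congr 1
  omega

lemma e_mem_Hsub (l : Y) (n : ℕ) (hn : 1 ≤ n) (hl : l (n - 1) = false) :
    e n ∈ Hsub l (2 * n - 1) := by
  apply AddSubgroup.subset_closure
  refine Set.mem_union_right _ ⟨2 * n - 1, ?_, cseq_eq_e l n hn hl⟩
  exact Set.mem_Icc.2 ⟨by omega, le_refl _⟩

lemma e_notMem_Hsub (l : Y) (n : ℕ) (hn : 1 ≤ n) (hl : l (n - 1) = true) :
    e n ∉ Hsub l (2 * n - 1) := by
  intro hmem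
  have hker : Hsub l (2 * n - 1) ≤
      (Finsupp.applyAddHom ((n : ℤ), false) : Vsp →+ ZMod 2).ker := by
    rw [Hsub, AddSubgroup.closure_le]
    rintro v (((⟨j, hj, rfl⟩ | ⟨j, hj, rfl⟩) : _ ∨ _) | ⟨m, hm, rfl⟩) <;>
      simp only [SetLike.mem_coe, AddMonoidHom.mem_ker, Finsupp.applyAddHom_apply]
    · exact Finsupp.single_eq_of_ne (by simp; omega)
    · exact Finsupp.single_eq_of_ne (by simp)
    · rw [cseq]
      simp only [Set.mem_Icc] at hm
      split_ifs with hcond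
      · refine Finsupp.single_eq_of_ne ?_
        simp only [ne_eq, Prod.mk.injEq, not_and]
        intro hidx
        exfalso
        have hm' : m = 2 * n - 1 := by omega
        subst hm'
        have h1 : (2 * n - 1) % 2 = 1 := by omega
        have h2 : (2 * n - 1 + 1) / 2 - 1 = n - 1 := by omega
        rw [h2] at hcond
        simp [h1, hl] at hcond
      · exact Finsupp.single_eq_of_ne (by simp)
  have := hker hmem
  rw [AddMonoidHom.mem_ker, Finsupp.applyAddHom_apply, e, Finsupp.single_eq_same] at this
  exact one_ne_zero this

lemma part1 (l : Y) (n : ℕ) (hn : 1 ≤ n) :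
    (l (n - 1) = false) ↔ e n ∈ Hsub l (2 * n - 1) := by
  constructor
  · exact e_mem_Hsub l n hn
  · intro h
    cases hl : l (n - 1) with
    | false => rfl
    | true => exact absurd h (e_notMem_Hsub l n hn hl)

section KeyLemma
variable {k : Type} [CommRing k] {Γ : Type*} [Group Γ] (H : Subgroup Γ)

/-- The coefficient-summing map `kΓ →+ k[Γ/H]`. -/
def cosetMap : MonoidAlgebra k Γ →+ ((Γ ⧸ H) →₀ k) :=
  (Finsupp.mapDomain.addMonoidHom (QuotientGroup.mk)).comp
    (MonoidAlgebra.coeffAddEquiv (R := k) (M := Γ)).toAddMonoidHom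

lemma cosetMap_apply (x : MonoidAlgebra k Γ) :
    cosetMap H x = Finsupp.mapDomain (QuotientGroup.mk) x.coeff := rfl

lemma cosetMap_single (g : Γ) (c : k) :
    cosetMap H (MonoidAlgebra.single g c) = Finsupp.single (QuotientGroup.mk g) c := by
  rw [cosetMap_apply, MonoidAlgebra.coeff_single, Finsupp.mapDomain_single]

lemma cosetMap_single_one_mul (g : Γ) (x : MonoidAlgebra k Γ) :
    cosetMap H (MonoidAlgebra.single g (1:k) * x) =
      Finsupp.mapDomain (fun y : Γ ⧸ H => g • y) (cosetMap H x) := by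
  induction x using MonoidAlgebra.induction_linear with
  | zero => simp
  | add a b ha hb => rw [mul_add, map_add, ha, hb, map_add, Finsupp.mapDomain_add]
  | single h c =>
      rw [MonoidAlgebra.single_mul_single, one_mul, cosetMap_single, cosetMap_single,
        Finsupp.mapDomain_single]
      congr 1

lemma cosetMap_mul_eq_zero (a x : MonoidAlgebra k Γ) (hx : cosetMap H x = 0) :
    cosetMap H (a * x) = 0 := by
  induction a using MonoidAlgebra.induction_linear with
  | zero => simp
  | add a b ha hb => rw [add_mul, map_add, ha, hb, add_zero]
  | single g c =>
      have h1 : (MonoidAlgebra.single g c) = c • MonoidAlgebra.single g (1:k) := by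
        simp [Finsupp.smul_single]
      rw [h1, smul_mul_assoc, cosetMap_apply, MonoidAlgebra.coeff_smul, Finsupp.mapDomain_smul, ← cosetMap_apply,
        cosetMap_single_one_mul, hx]
      simp

/-- The kernel of `cosetMap`, as a left ideal. -/
def cosetKer : Ideal (MonoidAlgebra k Γ) where
  carrier := {x : MonoidAlgebra k Γ | cosetMap H x = 0}
  zero_mem' := by simp
  add_mem' := fun {a b} ha hb => by
    simp only [Set.mem_setOf_eq] at *; rw [map_add, ha, hb, add_zero]
  smul_mem' := fun a x hx => by
    simp only [Set.mem_setOf_eq] at *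
    rw [smul_eq_mul]; exact cosetMap_mul_eq_zero H a x hx

/-- The ideal generated by `{g - 1 : g ∈ H}` is contained in the kernel of `cosetMap`. -/
lemma span_le_ker_cosetMap :
    Ideal.span ((fun g : Γ => (MonoidAlgebra.of k Γ g : MonoidAlgebra k Γ) - 1) '' (H : Set Γ))
      ≤ cosetKer H := by
  rw [Ideal.span_le]
  rintro _ ⟨g, hg, rfl⟩
  show cosetMap H _ = 0
  rw [map_sub, MonoidAlgebra.of_apply, cosetMap_single, MonoidAlgebra.one_def, cosetMap_single]
  rw [show QuotientGroup.mk g = ((1:Γ) : Γ ⧸ H) from QuotientGroup.eq.2 (by simpa using hg)]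
  simp

lemma smul_of_sub_one_notMem (c : k) (hc : c ≠ 0) (g : Γ) (hg : g ∉ H) :
    c • ((MonoidAlgebra.of k Γ g : MonoidAlgebra k Γ) - 1) ∉
      Ideal.span ((fun g : Γ => (MonoidAlgebra.of k Γ g : MonoidAlgebra k Γ) - 1) '' (H : Set Γ)) := by
  intro hmem
  have h0 : cosetMap H (c • ((MonoidAlgebra.of k Γ g : MonoidAlgebra k Γ) - 1)) = 0 :=
    span_le_ker_cosetMap H hmem
  rw [cosetMap_apply, MonoidAlgebra.coeff_smul, Finsupp.mapDomain_smul, ← cosetMap_apply, map_sub,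
    MonoidAlgebra.of_apply, cosetMap_single, MonoidAlgebra.one_def, cosetMap_single] at h0
  have hne : (QuotientGroup.mk g : Γ ⧸ H) ≠ QuotientGroup.mk 1 := by
    intro h
    exact hg (by simpa using QuotientGroup.eq.1 h)
  have := DFunLike.congr_fun h0 (QuotientGroup.mk g)
  rw [Finsupp.smul_apply, Finsupp.sub_apply, Finsupp.single_eq_same,
    Finsupp.single_eq_of_ne hne] at this
  simp at this
  exact hc this
end KeyLemma

/-! ### Glue lemmas for `Jl` -/

lemma ofV_mem_subgroupOfV_iff (H : AddSubgroup Vsp) (v : Vsp) :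
    ofV v ∈ subgroupOfV H ↔ v ∈ H := by
  rw [subgroupOfV, ofV, Subgroup.mem_map]
  constructor
  · rintro ⟨y, hy, hyv⟩
    have : y = Multiplicative.ofAdd v := SemidirectProduct.inl_injective hyv
    subst this
    exact hy
  · intro hv
    exact ⟨Multiplicative.ofAdd v, hv, rfl⟩

lemma smul_ui_eq (p : ℕ → ℕ) (l : Y) (i : ℕ) (x : ZG) :
    x • ui p l i = (Submodule.Quotient.mk (coeffHom (p i) x) :
      MonoidAlgebra (ZMod (p i)) G ⧸ grpIdeal (ZMod (p i)) (subgroupOfV (Hsub l i) : Set G)) := by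
  show (coeffHom (p i) x) • (Submodule.Quotient.mk (1 : MonoidAlgebra (ZMod (p i)) G) :
      MonoidAlgebra (ZMod (p i)) G ⧸ grpIdeal (ZMod (p i)) (subgroupOfV (Hsub l i) : Set G)) = _
  rw [← Submodule.Quotient.mk_smul, smul_eq_mul, mul_one]

lemma mem_Jl_iff (p : ℕ → ℕ) (l : Y) (x : ZG) :
    x ∈ Jl p l ↔ ∀ i : Idx, coeffHom (p i.1) x ∈
      grpIdeal (ZMod (p i.1)) (subgroupOfV (Hsub l i.1) : Set G) := by
  rw [Jl, LinearMap.mem_ker, LinearMap.toSpanSingleton_apply]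
  constructor
  · intro h i
    have : (x • ul p l) i = 0 := by rw [h]; rfl
    rw [Pi.smul_apply, ul, smul_ui_eq] at this
    exact (Submodule.Quotient.mk_eq_zero _).1 this
  · intro h
    funext i
    rw [Pi.smul_apply, ul, smul_ui_eq]
    exact (Submodule.Quotient.mk_eq_zero _).2 (h i)

lemma coeffHom_zOfV (q : ℕ) (v : Vsp) :
    coeffHom q (zOfV v) = MonoidAlgebra.of (ZMod q) G (ofV v) := by
  rw [coeffHom, zOfV]
  exact MonoidAlgebra.lift_of _ _

lemma coeffHom_elt (q : ℕ) (P : ℤ) (v : Vsp) :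
    coeffHom q (P • (zOfV v - 1)) =
      ((P : ZMod q)) • ((MonoidAlgebra.of (ZMod q) G (ofV v) : MonoidAlgebra (ZMod q) G) - 1) := by
  rw [map_zsmul, map_sub, map_one, coeffHom_zOfV, Int.cast_smul_eq_zsmul]

lemma Hsub_mono (l : Y) {i i' : ℕ} (h : i ≤ i') : Hsub l i ≤ Hsub l i' := by
  apply AddSubgroup.closure_mono
  apply Set.union_subset_union
  · apply Set.union_subset_union <;> exact Set.image_mono (Set.Icc_subset_Icc le_rfl h)
  · exact Set.image_mono (Set.Icc_subset_Icc le_rfl h)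

theorem stmt7 (p : ℕ → ℕ) (hp : ∀ i, 1 ≤ i → (p i).Prime)
    (hinj : ∀ i j, 1 ≤ i → 1 ≤ j → p i = p j → i = j)
    (l : Y) (n : ℕ) (hn : 1 ≤ n) :
    ((l (n - 1) = false) ↔ e n ∈ Hsub l (2 * n - 1)) ∧
    ((l (n - 1) = false) ↔
      (∏ j ∈ Finset.Icc 1 (2 * n - 2), (p j : ℤ)) • (zOfV (e n) - 1) ∈ Jl p l) := by
  refine ⟨part1 l n hn, ?_⟩
  set P : ℤ := ∏ j ∈ Finset.Icc 1 (2 * n - 2), (p j : ℤ) with hP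
  constructor
  · intro hl
    rw [mem_Jl_iff]
    intro i
    rw [map_zsmul, map_sub, map_one, coeffHom_zOfV]
    by_cases hi : i.1 ≤ 2 * n - 2
    · have hdvd : ((p i.1 : ℤ)) ∣ P := Finset.dvd_prod_of_mem _ (Finset.mem_Icc.2 ⟨i.2, hi⟩)
      haveI : NeZero (p i.1) := ⟨(hp i.1 i.2).pos.ne'⟩
      have h0 : ((P : ZMod (p i.1))) = 0 :=
        (ZMod.intCast_zmod_eq_zero_iff_dvd _ _).2 (by exact_mod_cast hdvd)
      rw [← Int.cast_smul_eq_zsmul (ZMod (p i.1)), h0, zero_smul]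
      exact Submodule.zero_mem _
    · have hi' : 2 * n - 1 ≤ i.1 := by omega
      have hmem : e n ∈ Hsub l i.1 := Hsub_mono l hi' (e_mem_Hsub l n hn hl)
      have hmem' : ofV (e n) ∈ subgroupOfV (Hsub l i.1) :=
        (ofV_mem_subgroupOfV_iff _ _).2 hmem
      refine zsmul_mem ?_ P
      exact Ideal.subset_span ⟨ofV (e n), hmem', rfl⟩
  · intro h
    cases hl : l (n - 1) with
    | false => rfl
    | true =>
      exfalso
      set q := p (2 * n - 1) with hq
      have hq1 : (1:ℕ) ≤ 2 * n - 1 := by omega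
      have hqp : q.Prime := hp _ hq1
      haveI : NeZero q := ⟨hqp.pos.ne'⟩
      have hmem := (mem_Jl_iff p l _).1 h ⟨2 * n - 1, hq1⟩
      rw [coeffHom_elt] at hmem
      have hc : ((P : ZMod q)) ≠ 0 := by
        intro h0
        rw [ZMod.intCast_zmod_eq_zero_iff_dvd] at h0
        have h1 : q ∣ ∏ j ∈ Finset.Icc 1 (2 * n - 2), p j := by
          rw [hP] at h0
          exact_mod_cast h0
        obtain ⟨j, hj, hdvd⟩ := (hqp.prime.dvd_finset_prod_iff _).1 h1
        rw [Finset.mem_Icc] at hj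
        have := (Nat.prime_dvd_prime_iff_eq hqp (hp j hj.1)).1 hdvd
        have := hinj _ _ hq1 hj.1 this
        omega
      have hg : ofV (e n) ∉ subgroupOfV (Hsub l (2 * n - 1)) := by
        rw [ofV_mem_subgroupOfV_iff]
        exact e_notMem_Hsub l n hn hl
      exact smul_of_sub_one_notMem _ _ hc _ hg hmem
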